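/- For m ≥ 3 and d > 0, p(⌊m(m+3)/8 + d·m^{3/2}/4⌋) > 2^m·2(1 − 1/d²)/(d·m^{3/2}). -/

import Mathlib

open Finset

/-- The partition function: the number of partitions of `n`. -/
def p (n : ℕ) : ℕ := Fintype.card (Nat.Partition n)

lemma p_pos (n : ℕ) : 0 < p n := Fintype.card_pos

lemma p_mono : Monotone p := by
  apply monotone_nat_of_le_succ
  intro n
  apply Fintype.card_le_of_injective
    (fun π => ⟨1 ::ₘ π.parts, by
      intro i hi
      rcases Multiset.mem_cons.mp hi with h | h
      · omega
      · exact π.parts_pos h, by simp [π.parts_sum, add_comm]⟩)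
  intro a b hab
  have := congrArg Nat.Partition.parts hab
  simp only at this
  exact Nat.Partition.ext ((Multiset.cons_inj_right 1).mp this)

lemma two_le_p {n : ℕ} (hn : 2 ≤ n) : 2 ≤ p n := by
  have h2 : 2 ≤ p 2 := by
    have : Nontrivial (Nat.Partition 2) := by
      refine ⟨⟨{2}, by intro i hi; simp at hi; omega, by simp⟩,
        ⟨{1, 1}, by intro i hi; simp at hi; omega, by simp⟩, ?_⟩
      intro h
      have := congrArg Nat.Partition.parts h
      simp only at this
      exact absurd this (by decide)
    exact Fintype.one_lt_card
  exact h2.trans (p_mono hn)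

lemma sm_le {k : ℕ} {f : Fin k → ℕ} (hf : StrictMono f) (i : Fin k) : i.val ≤ f i := by
  obtain ⟨j, hj⟩ := i
  induction j with
  | zero => exact Nat.zero_le _
  | succ n ih =>
    have h1 : n < k := by omega
    have h2 := ih h1
    have h3 : f ⟨n, h1⟩ < f ⟨n + 1, hj⟩ := hf (by simp [Fin.lt_def])
    simp only [Fin.val_mk] at *
    omega

lemma sm_add_le {k : ℕ} {f : Fin k → ℕ} (hf : StrictMono f) (i j : Fin k) (h : i ≤ j) :
    f i + j.val ≤ f j + i.val := by
  obtain ⟨jv, hj⟩ := j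
  induction jv with
  | zero =>
    have h0 : i.val = 0 := by simpa [Fin.le_def] using h
    have : i = ⟨0, hj⟩ := by ext; simpa using h0
    simp [this]
  | succ n ih =>
    rcases Nat.lt_or_ge i.val (n+1) with hlt | hge
    · have h1 : n < k := by omega
      have h2 := ih h1 (by simp [Fin.le_def]; omega)
      have h3 : f ⟨n, h1⟩ < f ⟨n + 1, hj⟩ := hf (by simp [Fin.lt_def])
      simp only [Fin.val_mk] at *
      omega
    · have hi : i = ⟨n+1, hj⟩ := by
        ext; simp only [Fin.le_def, Fin.val_mk] at h ⊢; omega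
      simp [hi]

/-- the parts list of the partition associated to a finite set of naturals -/
def plist (S : Finset ℕ) : List ℕ :=
  List.ofFn (fun i : Fin S.card => S.orderEmbOfFin rfl i + 1 - i.val)

/-- the number partitioned -/
def v (S : Finset ℕ) : ℕ := (plist S).sum

/-- real-valued statistic -/
noncomputable def q (S : Finset ℕ) : ℝ :=
  (∑ a ∈ S, ((a : ℝ) + 1)) - (S.card : ℝ) * ((S.card : ℝ) - 1) / 2

noncomputable def kk (S : Finset ℕ) : ℝ := (S.card : ℝ)

lemma plist_ge (S : Finset ℕ) (i : Fin S.card) : i.val ≤ S.orderEmbOfFin rfl i :=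
  sm_le (S.orderEmbOfFin rfl).strictMono i

lemma plist_pos (S : Finset ℕ) : ∀ {x : ℕ}, x ∈ plist S → 0 < x := by
  intro x hx
  simp only [plist, List.mem_ofFn, Set.mem_range] at hx
  obtain ⟨i, hi⟩ := hx
  have := plist_ge S i
  omega

lemma plist_sorted (S : Finset ℕ) : (plist S).Pairwise (· ≤ ·) := by
  rw [plist, List.pairwise_ofFn]
  intro i j hij
  have h1 := sm_add_le (S.orderEmbOfFin rfl).strictMono i j hij.le
  have h2 := plist_ge S i
  have h3 := plist_ge S j
  omega

lemma plist_inj {S T : Finset ℕ} (h : (plist S : Multiset ℕ) = (plist T : Multiset ℕ)) :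
    S = T := by
  have hperm : List.Perm (plist S) (plist T) := Multiset.coe_eq_coe.mp h
  have heq : plist S = plist T :=
    List.Perm.eq_of_pairwise' (plist_sorted S) (plist_sorted T) hperm
  have hlen : S.card = T.card := by
    have := congrArg List.length heq
    simpa [plist] using this
  have hpt : ∀ j (hj : j < S.card),
      S.orderEmbOfFin rfl ⟨j, hj⟩ = T.orderEmbOfFin rfl ⟨j, hlen ▸ hj⟩ := by
    intro j hj
    have hj1 : j < (plist S).length := by simpa [plist] using hj
    have hj2 : j < (plist T).length := by simpa [plist] using hlen ▸ hj
    have h1 : (plist S)[j]'hj1 = (plist T)[j]'hj2 := by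
      congr 1
    have h2 := plist_ge S ⟨j, hj⟩
    have h3 := plist_ge T ⟨j, hlen ▸ hj⟩
    simp only [plist, List.getElem_ofFn, Fin.val_mk] at h1
    simp only [Fin.val_mk] at h2 h3
    omega
  apply Finset.coe_injective
  rw [← Finset.range_orderEmbOfFin S rfl, ← Finset.range_orderEmbOfFin T rfl]
  ext x
  constructor
  · rintro ⟨i, rfl⟩
    exact ⟨Fin.cast hlen i, (hpt i.val i.isLt).symm⟩
  · rintro ⟨i, rfl⟩
    exact ⟨Fin.cast hlen.symm i, hpt i.val (by omega)⟩

lemma sum_emb (S : Finset ℕ) :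
    ∑ i : Fin S.card, ((S.orderEmbOfFin rfl i : ℝ)) = ∑ a ∈ S, (a : ℝ) := by
  apply Finset.sum_bij (fun (i : Fin S.card) (_ : i ∈ univ) => S.orderEmbOfFin rfl i)
  · intro i _; exact S.orderEmbOfFin_mem rfl i
  · intro i _ j _ h; exact (S.orderEmbOfFin rfl).injective h
  · intro a ha
    have : a ∈ Set.range (S.orderEmbOfFin rfl) := by
      rw [Finset.range_orderEmbOfFin]; exact ha
    obtain ⟨i, hi⟩ := this
    exact ⟨i, mem_univ i, hi⟩
  · intro i _; rfl

lemma gauss (k : ℕ) : ∑ i : Fin k, (i.val : ℝ) = k * (k - 1) / 2 := by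
  rw [Fin.sum_univ_eq_sum_range (fun i => (i : ℝ))]
  induction k with
  | zero => simp
  | succ n ih => rw [Finset.sum_range_succ, ih]; push_cast; ring

lemma v_cast (S : Finset ℕ) : (v S : ℝ) = q S := by
  rw [v, plist, List.sum_ofFn]
  push_cast
  have : ∀ i : Fin S.card,
      ((S.orderEmbOfFin rfl i + 1 - i.val : ℕ) : ℝ)
        = (S.orderEmbOfFin rfl i : ℝ) + 1 - (i.val : ℝ) := by
    intro i
    have := plist_ge S i
    push_cast [Nat.cast_sub (by omega : i.val ≤ S.orderEmbOfFin rfl i + 1)]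
    ring
  rw [Finset.sum_congr rfl (fun i _ => this i)]
  rw [Finset.sum_sub_distrib, Finset.sum_add_distrib, sum_emb, gauss]
  rw [q]
  rw [Finset.sum_add_distrib]
  simp [Finset.card_univ]

lemma q_insert {m : ℕ} {S : Finset ℕ} (hS : S ⊆ Finset.range m) :
    q (insert m S) = q S + (m + 1) - kk S := by
  have hm : m ∉ S := fun h => by simpa using hS h
  rw [q, q, kk, Finset.sum_insert hm, Finset.card_insert_of_notMem hm]
  push_cast
  ring

lemma kk_insert {m : ℕ} {S : Finset ℕ} (hS : S ⊆ Finset.range m) :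
    kk (insert m S) = kk S + 1 := by
  have hm : m ∉ S := fun h => by simpa using hS h
  rw [kk, kk, Finset.card_insert_of_notMem hm]
  push_cast
  ring

lemma sum_poly (s : Finset (Finset ℕ)) (a b c d e f : ℝ) :
    ∑ S ∈ s, (a * q S ^ 2 + b * (q S * kk S) + c * kk S ^ 2 + d * q S + e * kk S + f)
      = a * (∑ S ∈ s, q S ^ 2) + b * (∑ S ∈ s, q S * kk S) + c * (∑ S ∈ s, kk S ^ 2)
        + d * (∑ S ∈ s, q S) + e * (∑ S ∈ s, kk S) + f * s.card := by
  rw [Finset.sum_add_distrib, Finset.sum_add_distrib, Finset.sum_add_distrib,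
    Finset.sum_add_distrib, Finset.sum_add_distrib, ← Finset.mul_sum, ← Finset.mul_sum,
    ← Finset.mul_sum, ← Finset.mul_sum, ← Finset.mul_sum, Finset.sum_const]
  ring

lemma moments (m : ℕ) :
    (∑ S ∈ (range m).powerset, kk S) = m * 2 ^ m / 2 ∧
    (∑ S ∈ (range m).powerset, kk S ^ 2) = (m ^ 2 + m) * 2 ^ m / 4 ∧
    (∑ S ∈ (range m).powerset, q S) = (m ^ 2 + 3 * m) * 2 ^ m / 8 ∧
    (∑ S ∈ (range m).powerset, q S * kk S)
      = ((m:ℝ) ^ 3 + 3 * m ^ 2 + 4 * m) * 2 ^ m / 16 ∧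
    (∑ S ∈ (range m).powerset, q S ^ 2)
      = (3 * (m:ℝ) ^ 4 + 22 * m ^ 3 + 33 * m ^ 2 + 38 * m) * 2 ^ m / 192 := by
  induction m with
  | zero => simp [q, kk]
  | succ m ih =>
    obtain ⟨h1, h2, h3, h4, h5⟩ := ih
    have hcard : (((range m).powerset).card : ℝ) = 2 ^ m := by
      simp [Finset.card_powerset]
    have key : ∀ (F : Finset ℕ → ℝ),
        ∑ S ∈ (range (m+1)).powerset, F S
          = ∑ S ∈ (range m).powerset, F S + ∑ S ∈ (range m).powerset, F (insert m S) := by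
      intro F
      rw [Finset.range_add_one, Finset.sum_powerset_insert (by simp)]
    have conv1 : ∀ (G : ℝ → ℝ → ℝ),
        ∑ S ∈ (range m).powerset, G (q (insert m S)) (kk (insert m S))
          = ∑ S ∈ (range m).powerset, G (q S + (m + 1) - kk S) (kk S + 1) := by
      intro G
      refine Finset.sum_congr rfl fun S hS => ?_
      rw [q_insert (Finset.mem_powerset.mp hS), kk_insert (Finset.mem_powerset.mp hS)]
    refine ⟨?_, ?_, ?_, ?_, ?_⟩
    · rw [key, conv1 (fun x y => y)]
      have : ∑ S ∈ (range m).powerset, (kk S + 1)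
          = ∑ S ∈ (range m).powerset,
            (0 * q S ^ 2 + 0 * (q S * kk S) + 0 * kk S ^ 2 + 0 * q S + 1 * kk S + 1) := by
        refine Finset.sum_congr rfl fun S _ => by ring
      rw [this, sum_poly, h1, h2, h3, h4, h5, hcard]
      push_cast
      ring
    · rw [key, conv1 (fun x y => y ^ 2)]
      have : ∑ S ∈ (range m).powerset, (kk S + 1) ^ 2
          = ∑ S ∈ (range m).powerset,
            (0 * q S ^ 2 + 0 * (q S * kk S) + 1 * kk S ^ 2 + 0 * q S + 2 * kk S + 1) := by
        refine Finset.sum_congr rfl fun S _ => by ring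
      rw [this, sum_poly, h1, h2, h3, h4, h5, hcard]
      push_cast
      ring
    · rw [key, conv1 (fun x y => x)]
      have : ∑ S ∈ (range m).powerset, (q S + (m + 1) - kk S)
          = ∑ S ∈ (range m).powerset,
            (0 * q S ^ 2 + 0 * (q S * kk S) + 0 * kk S ^ 2 + 1 * q S + (-1) * kk S + (m+1)) := by
        refine Finset.sum_congr rfl fun S _ => by ring
      rw [this, sum_poly, h1, h2, h3, h4, h5, hcard]
      push_cast
      ring
    · rw [key, conv1 (fun x y => x * y)]
      have : ∑ S ∈ (range m).powerset, ((q S + (m + 1) - kk S) * (kk S + 1))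
          = ∑ S ∈ (range m).powerset,
            (0 * q S ^ 2 + 1 * (q S * kk S) + (-1) * kk S ^ 2 + 1 * q S
              + ((m:ℝ) + 1 - 1) * kk S + (m+1)) := by
        refine Finset.sum_congr rfl fun S _ => by ring
      rw [this, sum_poly, h1, h2, h3, h4, h5, hcard]
      push_cast
      ring
    · rw [key, conv1 (fun x y => x ^ 2)]
      have : ∑ S ∈ (range m).powerset, (q S + (m + 1) - kk S) ^ 2
          = ∑ S ∈ (range m).powerset,
            (1 * q S ^ 2 + (-2) * (q S * kk S) + 1 * kk S ^ 2 + (2 * ((m:ℝ)+1)) * q S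
              + (-2 * ((m:ℝ)+1)) * kk S + ((m:ℝ)+1)^2) := by
        refine Finset.sum_congr rfl fun S _ => by ring
      rw [this, sum_poly, h1, h2, h3, h4, h5, hcard]
      push_cast
      ring

lemma central (m : ℕ) :
    ∑ S ∈ (range m).powerset, (q S - (m : ℝ) * ((m : ℝ) + 3) / 8) ^ 2
      = 2 ^ m * ((2 * (m:ℝ) ^ 3 + 3 * (m:ℝ) ^ 2 + 19 * (m:ℝ)) / 96) := by
  obtain ⟨h1, h2, h3, h4, h5⟩ := moments m
  have hcard : (((range m).powerset).card : ℝ) = 2 ^ m := by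
    simp [Finset.card_powerset]
  have : ∑ S ∈ (range m).powerset, (q S - (m : ℝ) * ((m : ℝ) + 3) / 8) ^ 2
      = ∑ S ∈ (range m).powerset,
        (1 * q S ^ 2 + 0 * (q S * kk S) + 0 * kk S ^ 2
          + (-2 * ((m : ℝ) * ((m : ℝ) + 3) / 8)) * q S + 0 * kk S
          + ((m : ℝ) * ((m : ℝ) + 3) / 8) ^ 2) := by
    refine Finset.sum_congr rfl fun S _ => by ring
  rw [this, sum_poly, h1, h2, h3, h4, h5, hcard]
  ring
set_option maxHeartbeats 2000000

lemma cube_d (d : ℝ) (hd : 1 < d) : 9 * (d ^ 2 - 1) ≤ 2 * Real.sqrt 3 * d ^ 3 := by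
  have hs3 : Real.sqrt 3 ^ 2 = 3 := Real.sq_sqrt (by norm_num)
  have hs3p : 0 < Real.sqrt 3 := Real.sqrt_pos.mpr (by norm_num)
  have key : 0 ≤ (d - Real.sqrt 3) ^ 2 * (2 * d + Real.sqrt 3) := by positivity
  nlinarith [key]

lemma cube_s (s : ℝ) (hs0 : 0 ≤ s) (h5 : 5 ≤ s ^ 2) :
    24 * s ^ 3 ≤ 4 * s ^ 6 - 3 * s ^ 4 - 19 * s ^ 2 + 24 := by
  nlinarith [sq_nonneg s, sq_nonneg (s^2 - 5), sq_nonneg (s - 2),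
    mul_nonneg hs0 (sq_nonneg (s^2-5)), sq_nonneg (s^3 - 3*s)]

lemma var_le (s : ℝ) (hs0 : 0 ≤ s) (h5 : 5 ≤ s ^ 2) :
    (2 * (s^2) ^ 3 + 3 * (s^2) ^ 2 + 19 * (s^2)) / 96 ≤ (s^2 * s / 4 - 1/2) ^ 2 := by
  nlinarith [cube_s s hs0 h5]

/-- For `m ≥ 3` and `d > 0`,
`p(⌊m(m+3)/8 + d·m^{3/2}/4⌋) > 2^m · 2(1 - 1/d²)/(d·m^{3/2})`. -/
theorem p_floor_gt (m : ℕ) (hm : 3 ≤ m) (d : ℝ) (hd : 0 < d) :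
    (2 : ℝ) ^ m * 2 * (1 - 1 / d ^ 2) / (d * (m : ℝ) ^ ((3 : ℝ) / 2)) <
      (p ⌊(m : ℝ) * ((m : ℝ) + 3) / 8 + d * (m : ℝ) ^ ((3 : ℝ) / 2) / 4⌋₊ : ℝ) := by
  classical
  have hm3 : (3 : ℝ) ≤ (m : ℝ) := by exact_mod_cast hm
  have hm0 : (0 : ℝ) < (m : ℝ) := by linarith
  obtain ⟨s, hs_def⟩ : ∃ s : ℝ, s = Real.sqrt m := ⟨_, rfl⟩
  have hs0 : 0 < s := hs_def ▸ Real.sqrt_pos.mpr hm0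
  have hs2 : s ^ 2 = (m : ℝ) := hs_def ▸ Real.sq_sqrt hm0.le
  obtain ⟨M, hM_def⟩ : ∃ M : ℝ, M = (m : ℝ) ^ ((3 : ℝ) / 2) := ⟨_, rfl⟩
  have hM : M = (m : ℝ) * s := by
    rw [hM_def, hs_def, show (3:ℝ)/2 = 1 + 1/2 by norm_num, Real.rpow_add hm0,
      Real.rpow_one, Real.sqrt_eq_rpow]
  rw [← hM_def]
  obtain ⟨μ, hμ_def⟩ : ∃ μ : ℝ, μ = (m : ℝ) * ((m : ℝ) + 3) / 8 := ⟨_, rfl⟩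
  rw [← hμ_def]
  obtain ⟨N, hN_def⟩ : ∃ N : ℕ, N = ⌊μ + d * M / 4⌋₊ := ⟨_, rfl⟩
  rw [← hN_def]
  have hμ0 : (9 : ℝ) / 4 ≤ μ := by rw [hμ_def]; nlinarith
  have hMpos : 0 < M := by rw [hM]; positivity
  have ht0 : 0 < d * M / 4 := by positivity
  have hdM : 0 < d * M := by positivity
  rcases le_or_gt d 1 with hd1 | hd1
  · -- trivial case : LHS nonpositive
    have hp : (0 : ℝ) < (p N : ℝ) := by exact_mod_cast p_pos N
    refine lt_of_le_of_lt ?_ hp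
    apply div_nonpos_of_nonpos_of_nonneg _ hdM.le
    have : 1 ≤ 1 / d ^ 2 := by
      rw [le_div_iff₀ (by positivity)]
      nlinarith
    nlinarith [pow_pos (show (0:ℝ) < 2 by norm_num) m]
  · -- d > 1
    have hs3 : Real.sqrt 3 ^ 2 = 3 := Real.sq_sqrt (by norm_num)
    have hs3p : 0 < Real.sqrt 3 := Real.sqrt_pos.mpr (by norm_num)
    have hcube : 9 * (d ^ 2 - 1) ≤ 2 * Real.sqrt 3 * d ^ 3 := cube_d d hd1
    rcases lt_or_ge m 5 with hm5 | hm5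
    · -- m = 3 or m = 4
      have hN2 : 2 ≤ N := by
        rw [hN_def]
        apply Nat.le_floor
        push_cast
        linarith
      have h2p : (2 : ℝ) ≤ (p N : ℝ) := by exact_mod_cast two_le_p hN2
      refine lt_of_lt_of_le ?_ h2p
      rw [div_lt_iff₀ hdM, hM]
      -- goal : 2 ^ m * 2 * (1 - 1 / d ^ 2) < 2 * (d * (m * s))
      have hu : (1 - 1 / d ^ 2) * d ^ 2 = d ^ 2 - 1 := by
        field_simp
      have hdd : (0:ℝ) < d ^ 2 := by positivity
      interval_cases m
      · -- m = 3
        have hsv : s = Real.sqrt 3 := by rw [hs_def]; norm_num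
        rw [hsv]
        push_cast
        nlinarith [hcube, hs3p, hd1, hu, hdd, mul_pos hs3p hdd]
      · -- m = 4
        have hsv : s = 2 := by
          rw [hs_def, show ((4:ℕ):ℝ) = 2 ^ 2 by norm_num, Real.sqrt_sq (by norm_num)]
        rw [hsv]
        push_cast
        nlinarith [hcube, hd1, hs3, hu, hdd, mul_pos hdd hd, sq_nonneg (Real.sqrt 3 - 2), hs3p]
    · -- m ≥ 5 : Chebyshev
      have hm5' : (5 : ℝ) ≤ (m : ℝ) := by exact_mod_cast hm5
      have hs2' : (5 : ℝ) ≤ s ^ 2 := by rw [hs2]; exact hm5'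
      have hsge : 2 ≤ s := by nlinarith [hs2', hs0]
      have hms : 10 ≤ (m : ℝ) * s := by nlinarith [hm5', hsge]
      obtain ⟨t', ht'_def⟩ : ∃ x : ℝ, x = d * M / 4 - 1/2 := ⟨_, rfl⟩
      have ht'pos : 0 < t' := by
        rw [ht'_def, hM]
        nlinarith [hms, hd1]
      obtain ⟨V, hV_def⟩ : ∃ x : ℝ, x = (2 * (m:ℝ) ^ 3 + 3 * (m:ℝ) ^ 2 + 19 * (m:ℝ)) / 96 :=
        ⟨_, rfl⟩
      -- key variance bound
      have hVle : V ≤ ((m:ℝ) * s / 4 - 1/2) ^ 2 := by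
        rw [hV_def, ← hs2]
        exact var_le s hs0.le hs2'
      have hVd : V * d ^ 2 < t' ^ 2 := by
        have h1 : ((m:ℝ) * s / 4 - 1/2) ^ 2 < ((m:ℝ) * s / 4 - 1/(2*d)) ^ 2 := by
          apply pow_lt_pow_left₀ _ (by nlinarith [one_div_pos.mpr hd]) (by norm_num)
          have : 1/(2*d) < 1/2 := by
            apply div_lt_div_of_pos_left <;> nlinarith
          nlinarith
        have h2 : ((m:ℝ) * s / 4 - 1/(2*d)) * d = t' := by
          rw [ht'_def, hM]
          field_simp
        calc V * d ^ 2 ≤ ((m:ℝ) * s / 4 - 1/2) ^ 2 * d ^ 2 := by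
              apply mul_le_mul_of_nonneg_right hVle (by positivity)
          _ < ((m:ℝ) * s / 4 - 1/(2*d)) ^ 2 * d ^ 2 := by
              apply mul_lt_mul_of_pos_right h1 (by positivity)
          _ = (((m:ℝ) * s / 4 - 1/(2*d)) * d) ^ 2 := by ring
          _ = t' ^ 2 := by rw [h2]
      -- Chebyshev
      obtain ⟨P, hP_def⟩ : ∃ x : Finset (Finset ℕ), x = (range m).powerset := ⟨_, rfl⟩
      obtain ⟨bad, hbad_def⟩ : ∃ x : Finset (Finset ℕ),
        x = P.filter (fun S => t' ≤ |q S - μ|) := ⟨_, rfl⟩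
      obtain ⟨good, hgood_def⟩ : ∃ x : Finset (Finset ℕ),
        x = P.filter (fun S => ¬ t' ≤ |q S - μ|) := ⟨_, rfl⟩
      have hPcard : (P.card : ℝ) = 2 ^ m := by
        rw [hP_def]; simp [Finset.card_powerset]
      have hsplit : bad.card + good.card = P.card := by
        rw [hbad_def, hgood_def]
        exact Finset.card_filter_add_card_filter_not _
      have hvar : ∑ S ∈ P, (q S - μ) ^ 2 = 2 ^ m * V := by
        rw [hP_def, hμ_def, hV_def]
        exact central m
      have hbadbound : (bad.card : ℝ) * t' ^ 2 ≤ 2 ^ m * V := by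
        rw [← hvar]
        calc (bad.card : ℝ) * t' ^ 2 = ∑ _S ∈ bad, t' ^ 2 := by
              rw [Finset.sum_const, nsmul_eq_mul]
          _ ≤ ∑ S ∈ bad, (q S - μ) ^ 2 := by
              apply Finset.sum_le_sum
              intro S hS
              rw [hbad_def] at hS
              have hS' : t' ≤ |q S - μ| := (Finset.mem_filter.mp hS).2
              calc t' ^ 2 ≤ |q S - μ| ^ 2 := by
                    apply pow_le_pow_left₀ ht'pos.le hS'
                _ = (q S - μ) ^ 2 := sq_abs _
          _ ≤ ∑ S ∈ P, (q S - μ) ^ 2 := by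
              apply Finset.sum_le_sum_of_subset_of_nonneg (by rw [hbad_def]; exact Finset.filter_subset _ _)
              intro S _ _
              exact sq_nonneg _
      have hgoodlb : (2:ℝ) ^ m * (1 - 1/d^2) < good.card := by
        have hbc : (bad.card : ℝ) < 2 ^ m / d ^ 2 := by
          have h1 : (bad.card : ℝ) * t' ^ 2 < (2 ^ m / d ^ 2) * t' ^ 2 := by
            calc (bad.card : ℝ) * t' ^ 2 ≤ 2 ^ m * V := hbadbound
              _ < (2 ^ m / d ^ 2) * t' ^ 2 := by
                  rw [div_mul_eq_mul_div, lt_div_iff₀ (by positivity : (0:ℝ) < d ^ 2)]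
                  nlinarith [hVd, pow_pos (show (0:ℝ) < 2 by norm_num) m]
          exact lt_of_mul_lt_mul_right h1 (by positivity)
        have hgc : (good.card : ℝ) = 2 ^ m - bad.card := by
          have := congrArg (fun x : ℕ => (x : ℝ)) hsplit
          push_cast at this
          rw [hPcard] at this
          linarith
        rw [hgc]
        have : (2:ℝ) ^ m * (1 - 1/d^2) = 2 ^ m - 2 ^ m / d ^ 2 := by ring
        rw [this]
        linarith
      -- counting
      obtain ⟨a, ha_def⟩ : ∃ x : ℕ, x = ⌈μ - t'⌉₊ := ⟨_, rfl⟩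
      obtain ⟨b, hb_def⟩ : ∃ x : ℕ, x = ⌊μ + t'⌋₊ := ⟨_, rfl⟩
      have hμt' : (0:ℝ) ≤ μ + t' := by linarith
      have hfib : ∀ S ∈ good, v S ∈ Finset.Icc a b := by
        intro S hS
        rw [hgood_def] at hS
        have habs : |q S - μ| < t' := not_le.mp (Finset.mem_filter.mp hS).2
        rw [abs_lt] at habs
        rw [Finset.mem_Icc]
        constructor
        · rw [ha_def]
          apply Nat.ceil_le.mpr
          rw [v_cast]
          linarith [habs.1]
        · rw [hb_def]
          apply Nat.le_floor
          rw [v_cast]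
          linarith [habs.2]
      have hbN : b ≤ N := by
        rw [hb_def, hN_def]
        apply Nat.floor_mono
        rw [ht'_def]
        linarith
      have hfibcard : ∀ w ∈ Finset.Icc a b, (good.filter (fun S => v S = w)).card ≤ p N := by
        intro w hw
        have h1 : (good.filter (fun S => v S = w)).card ≤ p w := by
          rw [p]
          rw [← Finset.card_univ (α := Nat.Partition w)]
          apply Finset.card_le_card_of_injOn
            (fun S => if h : v S = w then
              (⟨(plist S : Multiset ℕ), fun {x} hx => plist_pos S hx, by rw [← h]; rfl⟩ :
                Nat.Partition w)
              else Classical.arbitrary _)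
          · intro S _; exact Finset.mem_univ _
          · intro S hS T hT hST
            have hSw : v S = w := (Finset.mem_filter.mp hS).2
            have hTw : v T = w := (Finset.mem_filter.mp hT).2
            simp only [dif_pos hSw, dif_pos hTw] at hST
            have := congrArg Nat.Partition.parts hST
            simp only at this
            exact plist_inj this
        have h2 : p w ≤ p N := p_mono ((Finset.mem_Icc.mp hw).2.trans hbN)
        omega
      have hgoodub : good.card ≤ (Finset.Icc a b).card * p N := by
        rw [Finset.card_eq_sum_card_fiberwise hfib]
        calc ∑ w ∈ Finset.Icc a b, (good.filter (fun S => v S = w)).card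
            ≤ ∑ _w ∈ Finset.Icc a b, p N := Finset.sum_le_sum hfibcard
          _ = (Finset.Icc a b).card * p N := by rw [Finset.sum_const, smul_eq_mul]
      have hIcc : ((Finset.Icc a b).card : ℝ) ≤ 2 * t' + 1 := by
        rw [Nat.card_Icc]
        rcases le_or_gt a (b + 1) with h | h
        · rw [Nat.cast_sub h]
          have hble : (b : ℝ) ≤ μ + t' := by rw [hb_def]; exact Nat.floor_le hμt'
          have hale : μ - t' ≤ (a : ℝ) := by rw [ha_def]; exact Nat.le_ceil _
          push_cast
          linarith
        · rw [Nat.sub_eq_zero_of_le (by omega)]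
          push_cast
          linarith
      -- final assembly
      have hfin : (2:ℝ) ^ m * (1 - 1/d^2) < (2 * t' + 1) * p N := by
        calc (2:ℝ) ^ m * (1 - 1/d^2) < good.card := hgoodlb
          _ ≤ ((Finset.Icc a b).card : ℝ) * p N := by exact_mod_cast hgoodub
          _ ≤ (2 * t' + 1) * p N := by
              apply mul_le_mul_of_nonneg_right hIcc (by positivity)
      rw [div_lt_iff₀ hdM]
      have h2t : 2 * t' + 1 = d * M / 2 := by
        rw [ht'_def]; ring
      rw [h2t] at hfin
      nlinarith [hfin]
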